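/- arXiv:2203.05005 — 2 statements merged into one kernel-verified Lean document; each statement's English description precedes it below -/
import Mathlib

section
/- Let p ∈ [1, ∞), μ, μ̃ ∈ P_p(X), ν, ν̃ ∈ P_p(Y), and let γ = μ ⊗ K^μ ∈ Π(μ, μ̃) and γ' = ν ⊗ K^ν ∈ Π(ν, ν̃). For π, κ ∈ Π(μ, ν), let π̃ and κ̃ be the (K^μ, K^ν)-shadows of π and κ respectively. Then D_KL(π̃, κ̃) ≤ D_KL(π, κ). In particular, since μ̃ ⊗ ν̃ is the (K^μ, K^ν)-shadow of μ ⊗ ν, it holds that D_KL(π̃, μ̃ ⊗ ν̃) ≤ D_KL(π, μ ⊗ ν). -/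
open MeasureTheory ProbabilityTheory Filter Set
open scoped ENNReal NNReal Topology ProbabilityTheory

noncomputable section

namespace AOT

variable {N : ℕ}

/-- The σ-algebra on a path space generated by the `t`-th coordinate. -/
def coordσ (X : Fin N → Type*) [∀ t, MeasurableSpace (X t)] (t : Fin N) :
    MeasurableSpace (∀ s, X s) :=
  MeasurableSpace.comap (fun x => x t) inferInstance

/-- The σ-algebra generated by the coordinates (strictly) before time `t`, from a family
of coordinate σ-algebras. -/
def pastσOf {A : Type*} (m : Fin N → MeasurableSpace A) (t : ℕ) : MeasurableSpace A :=
  ⨆ s : Fin N, ⨆ _ : (s : ℕ) < t, m s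

/-- The σ-algebra on a path space generated by the coordinates before time `t`. -/
def pastσ (X : Fin N → Type*) [∀ t, MeasurableSpace (X t)] (t : ℕ) :
    MeasurableSpace (∀ s, X s) :=
  pastσOf (coordσ X) t

/-- Conditional independence of the sub-σ-algebras `m₁` and `m₂` given `m₃`, under the
measure `π`: for all sets `A ∈ m₁`, `B ∈ m₂`, the conditional expectation (given `m₃`)
of the indicator of `A ∩ B` is a.s. the product of those of `A` and of `B`. -/
def CondIndepσ {Ω : Type*} {mΩ : MeasurableSpace Ω} (m₁ m₂ m₃ : MeasurableSpace Ω)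
    (π : @Measure Ω mΩ) : Prop :=
  ∀ A B : Set Ω, MeasurableSet[m₁] A → MeasurableSet[m₂] B →
    (π[(A ∩ B).indicator (fun _ => (1 : ℝ)) | m₃]) =ᵐ[π]
      (π[A.indicator (fun _ => (1 : ℝ)) | m₃]) * (π[B.indicator (fun _ => (1 : ℝ)) | m₃])

/-- Causality of a measure on `A × B` relative to families of coordinate σ-algebras
`mA` on `A` and `mB` on `B`: for every time `t`, the `t`-th coordinate of the first
component is conditionally independent of the (strict) past of the second component,
given the (strict) past of the first component. -/
def IsCausalFor {A B : Type*} [MeasurableSpace A] [MeasurableSpace B]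
    (mA : Fin N → MeasurableSpace A) (mB : Fin N → MeasurableSpace B)
    (π : Measure (A × B)) : Prop :=
  ∀ t : Fin N,
    CondIndepσ ((mA t).comap Prod.fst)
      ((pastσOf mB (t : ℕ)).comap Prod.snd)
      ((pastσOf mA (t : ℕ)).comap Prod.fst) π

/-- Anticausality: causality with the roles of the two components exchanged. -/
def IsAnticausalFor {A B : Type*} [MeasurableSpace A] [MeasurableSpace B]
    (mA : Fin N → MeasurableSpace A) (mB : Fin N → MeasurableSpace B)
    (π : Measure (A × B)) : Prop :=
  IsCausalFor mB mA (π.map Prod.swap)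

/-- A coupling of a measure on `X₁ × ⋯ × X_N` and a measure on `Y₁ × ⋯ × Y_N` is causal if
under it, for every `t`, `Y_{1:t}` is conditionally independent of `X_{t+1}` given `X_{1:t}`. -/
def IsCausal {X Y : Fin N → Type*} [∀ t, MeasurableSpace (X t)] [∀ t, MeasurableSpace (Y t)]
    (π : Measure ((∀ t, X t) × (∀ t, Y t))) : Prop :=
  IsCausalFor (coordσ X) (coordσ Y) π

def IsAnticausal {X Y : Fin N → Type*} [∀ t, MeasurableSpace (X t)] [∀ t, MeasurableSpace (Y t)]
    (π : Measure ((∀ t, X t) × (∀ t, Y t))) : Prop :=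
  IsAnticausalFor (coordσ X) (coordσ Y) π

def IsBicausal {X Y : Fin N → Type*} [∀ t, MeasurableSpace (X t)] [∀ t, MeasurableSpace (Y t)]
    (π : Measure ((∀ t, X t) × (∀ t, Y t))) : Prop :=
  IsCausal π ∧ IsAnticausal π

/-- `π` is a coupling of `μ` and `ν`. -/
def IsCoupling {A B : Type*} [MeasurableSpace A] [MeasurableSpace B]
    (μ : Measure A) (ν : Measure B) (π : Measure (A × B)) : Prop :=
  π.map Prod.fst = μ ∧ π.map Prod.snd = ν

/-- The four flavors of (adapted) optimal transport: plain, causal, anticausal, bicausal. -/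
inductive Flavor | plain | causal | anticausal | bicausal

/-- The adaptedness constraint corresponding to a flavor. -/
def IsAdapted {X Y : Fin N → Type*} [∀ t, MeasurableSpace (X t)] [∀ t, MeasurableSpace (Y t)] :
    Flavor → Measure ((∀ t, X t) × (∀ t, Y t)) → Prop
  | .plain => fun _ => True
  | .causal => fun π => IsCausal π
  | .anticausal => fun π => IsAnticausal π
  | .bicausal => fun π => IsBicausal π

/-- The set `Π_•(μ, ν)` of couplings of `μ` and `ν` with the adaptedness constraint
given by the flavor `b`. -/
def aCouplings {X Y : Fin N → Type*} [∀ t, MeasurableSpace (X t)] [∀ t, MeasurableSpace (Y t)]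
    (b : Flavor) (μ : Measure (∀ t, X t)) (ν : Measure (∀ t, Y t)) :
    Set (Measure ((∀ t, X t) × (∀ t, Y t))) :=
  {π | IsCoupling μ ν π ∧ IsAdapted b π}

/-- `p`-th power transport cost of a coupling. -/
def lcost (p : ℝ) {A : Type*} [MeasurableSpace A] [PseudoEMetricSpace A]
    (π : Measure (A × A)) : ℝ≥0∞ :=
  ∫⁻ z, edist z.1 z.2 ^ p ∂π

/-- The (adapted) Wasserstein distance `W_{p,•}` between two measures on a path space. -/
def W {X : Fin N → Type*} [∀ t, MeasurableSpace (X t)] [∀ t, PseudoEMetricSpace (X t)]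
    (p : ℝ) (b : Flavor) (μ ν : Measure (∀ t, X t)) : ℝ≥0∞ :=
  (⨅ π : aCouplings b μ ν, lcost p π.1) ^ (1 / p)

/-- Coordinate σ-algebras on `X × Y` viewed as a single path space with
coordinates `X_t × Y_t`. -/
def coordσ2 (X Y : Fin N → Type*) [∀ t, MeasurableSpace (X t)] [∀ t, MeasurableSpace (Y t)]
    (t : Fin N) : MeasurableSpace ((∀ s, X s) × (∀ s, Y s)) :=
  ((coordσ X t).comap Prod.fst) ⊔ ((coordσ Y t).comap Prod.snd)

/-- Adaptedness for measures on `(X × Y) × (X × Y)`, where `X × Y` is regarded as a single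
path space with `N` time steps, the `t`-th coordinate being `X_t × Y_t`. -/
def IsAdapted2 {X Y : Fin N → Type*} [∀ t, MeasurableSpace (X t)] [∀ t, MeasurableSpace (Y t)] :
    Flavor → Measure (((∀ t, X t) × (∀ t, Y t)) × ((∀ t, X t) × (∀ t, Y t))) → Prop
  | .plain => fun _ => True
  | .causal => fun θ => IsCausalFor (coordσ2 X Y) (coordσ2 X Y) θ
  | .anticausal => fun θ => IsAnticausalFor (coordσ2 X Y) (coordσ2 X Y) θ
  | .bicausal => fun θ => IsCausalFor (coordσ2 X Y) (coordσ2 X Y) θ ∧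
      IsAnticausalFor (coordσ2 X Y) (coordσ2 X Y) θ

/-- The set `Π_•(π, π̃)` of couplings of two measures on `X × Y`, with adaptedness understood
for `X × Y` as one path space. -/
def aCouplings2 {X Y : Fin N → Type*} [∀ t, MeasurableSpace (X t)] [∀ t, MeasurableSpace (Y t)]
    (b : Flavor) (π ρ : Measure ((∀ t, X t) × (∀ t, Y t))) :
    Set (Measure (((∀ t, X t) × (∀ t, Y t)) × ((∀ t, X t) × (∀ t, Y t)))) :=
  {θ | IsCoupling π ρ θ ∧ IsAdapted2 b θ}

/-- `p`-th power transport cost `∫ d_X(x,x̃)^p + d_Y(y,ỹ)^p dθ` for couplings of couplings. -/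
def lcost2 (p : ℝ) {A B : Type*} [MeasurableSpace A] [MeasurableSpace B]
    [PseudoEMetricSpace A] [PseudoEMetricSpace B]
    (θ : Measure ((A × B) × (A × B))) : ℝ≥0∞ :=
  ∫⁻ z, (edist z.1.1 z.2.1 ^ p + edist z.1.2 z.2.2 ^ p) ∂θ

/-- The (adapted) Wasserstein distance `W_{p,•}(π, π̃)` between couplings, with cost
`d_X^p + d_Y^p` and `X × Y` regarded as one path space. -/
def W2 {X Y : Fin N → Type*} [∀ t, MeasurableSpace (X t)] [∀ t, MeasurableSpace (Y t)]
    [∀ t, PseudoEMetricSpace (X t)] [∀ t, PseudoEMetricSpace (Y t)]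
    (p : ℝ) (b : Flavor) (π ρ : Measure ((∀ t, X t) × (∀ t, Y t))) : ℝ≥0∞ :=
  (⨅ θ : aCouplings2 b π ρ, lcost2 p θ.1) ^ (1 / p)

/- Relative entropy (Kullback-Leibler divergence): `D_KL(π, ρ) = ∫ log (dπ/dρ) dπ` if
`π ≪ ρ` and the integral is defined, and `∞` otherwise. -/
open Classical in
def KL {Ω : Type*} [MeasurableSpace Ω] (π ρ : Measure Ω) : ℝ≥0∞ :=
  if π ≪ ρ ∧ Integrable (llr π ρ) π then ENNReal.ofReal (∫ ω, llr π ρ ω ∂π) else ⊤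

/-- The transport value `V_•(μ, ν, c)`. -/
def V {X Y : Fin N → Type*} [∀ t, MeasurableSpace (X t)] [∀ t, MeasurableSpace (Y t)]
    (b : Flavor) (μ : Measure (∀ t, X t)) (ν : Measure (∀ t, Y t))
    (c : (∀ t, X t) × (∀ t, Y t) → ℝ) : ℝ :=
  ⨅ π : aCouplings b μ ν, ∫ z, c z ∂π.1

/-- The entropic objective `∫ c dπ + ε D_KL(π, P)`, valued in `EReal`. -/
def entObj {Ω : Type*} [MeasurableSpace Ω] (c : Ω → ℝ) (ε : ℝ) (P : Measure Ω)
    (π : Measure Ω) : EReal :=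
  ((∫ z, c z ∂π : ℝ) : EReal) + (ε : EReal) * ((KL π P : ℝ≥0∞) : EReal)

/-- The entropic transport value `E_•^ε(μ, ν, c)`, valued in `EReal`. -/
def EE {X Y : Fin N → Type*} [∀ t, MeasurableSpace (X t)] [∀ t, MeasurableSpace (Y t)]
    (b : Flavor) (μ : Measure (∀ t, X t)) (ν : Measure (∀ t, Y t))
    (c : (∀ t, X t) × (∀ t, Y t) → ℝ) (ε : ℝ) : EReal :=
  ⨅ π : aCouplings b μ ν, entObj c ε (μ.prod ν) π.1

/-- The kernel `K(x, y) := K^μ(x) ⊗ K^ν(y)` used to build the shadow. -/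
def shadowKernel {A A' B B' : Type*} [MeasurableSpace A] [MeasurableSpace A']
    [MeasurableSpace B] [MeasurableSpace B']
    (Kμ : Kernel A A') (Kν : Kernel B B') : Kernel (A × B) (A' × B') :=
  (Kμ.comap Prod.fst measurable_fst) ×ₖ (Kν.comap Prod.snd measurable_snd)

/-- The `(K^μ, K^ν)`-shadow of `π`: the second marginal of `π ⊗ (K^μ ⊗ K^ν)`. -/
def shadow {A A' B B' : Type*} [MeasurableSpace A] [MeasurableSpace A']
    [MeasurableSpace B] [MeasurableSpace B']
    (π : Measure (A × B)) (Kμ : Kernel A A') (Kν : Kernel B B') : Measure (A' × B') :=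
  (π ⊗ₘ (shadowKernel Kμ Kν)).map Prod.snd

/-- `μ` has a finite `p`-th moment. -/
def MemPp {A : Type*} [MeasurableSpace A] [PseudoEMetricSpace A] (p : ℝ) (μ : Measure A) :
    Prop :=
  ∀ x₀ : A, ∫⁻ x, edist x₀ x ^ p ∂μ ≠ ⊤

/-- `c` has growth of order at most `p`. -/
def GrowthLE {A B : Type*} [PseudoEMetricSpace A] [PseudoEMetricSpace B]
    (p : ℝ) (c : A × B → ℝ) : Prop :=
  ∃ (x₀ : A) (y₀ : B) (M : ℝ), ∀ z : A × B,
    |c z| ≤ M * (1 + (edist x₀ z.1).toReal ^ p + (edist y₀ z.2).toReal ^ p)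

/-- Weak convergence of a sequence of measures (testing against bounded continuous
functions). -/
def WeakTendsto {A : Type*} [MeasurableSpace A] [TopologicalSpace A]
    (πs : ℕ → Measure A) (π : Measure A) : Prop :=
  ∀ f : BoundedContinuousFunction A ℝ,
    Tendsto (fun n => ∫ x, f x ∂(πs n)) atTop (𝓝 (∫ x, f x ∂π))

/-- A finitely supported (discrete) measure. -/
def FinitelySupported {A : Type*} [MeasurableSpace A] (μ : Measure A) : Prop :=
  ∃ s : Finset A, μ (↑s)ᶜ = 0


/-- `K` is a version of the conditional distribution of the random element `V` given the
sub-σ-algebra `m`, under the measure `ρ`. -/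
def IsCondDistrib' {Ω E : Type*} {mΩ : MeasurableSpace Ω} [MeasurableSpace E]
    (ρ : @Measure Ω mΩ) (V : Ω → E) (m : MeasurableSpace Ω) (K : Ω → Measure E) : Prop :=
  (∀ ω, IsProbabilityMeasure (K ω)) ∧
  (∀ A : Set E, MeasurableSet A → Measurable[m] (fun ω => (K ω A).toReal)) ∧
  (∀ A : Set E, MeasurableSet A →
    (ρ[(V ⁻¹' A).indicator (fun _ => (1 : ℝ)) | m]) =ᵐ[ρ] fun ω => (K ω A).toReal)

/-- `Kμ` is a family of disintegration kernels of `μ` on a path space: `Kμ t` is a version of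
the conditional distribution of the `t`-th coordinate given the past before `t`. -/
def IsDisintegration {X : Fin N → Type*} [∀ t, MeasurableSpace (X t)]
    (μ : Measure (∀ t, X t)) (Kμ : ∀ t : Fin N, (∀ s, X s) → Measure (X t)) : Prop :=
  ∀ t : Fin N, IsCondDistrib' μ (fun x => x t) (pastσ X (t : ℕ)) (Kμ t)

variable {X Y : Fin N → Type*} [∀ t, MeasurableSpace (X t)] [∀ t, MeasurableSpace (Y t)]

open Classical in
/-- Membership in the dual building block `A_{X,μ,t}` (relative to a fixed family `Kμ` of
disintegration kernels of `μ`): for `t = 1` the bounded measurable functions of `x₁`; for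
`t ≥ 2` functions `a_t(x_{1:t}, y_{1:t-1}) - ∫ a_t(x_{1:t-1}, x̃_t, y_{1:t-1}) μ_t^{x_{1:t-1}}(dx̃_t)`
with `a_t` bounded measurable. (Here `τ` is the 0-based coordinate index, `τ = t - 1`.) -/
def MemAX (Kμ : ∀ t : Fin N, (∀ s, X s) → Measure (X t)) (τ : Fin N)
    (f : (∀ t, X t) × (∀ t, Y t) → ℝ) : Prop :=
  if (τ : ℕ) = 0 then
    ∃ a : (∀ t, X t) × (∀ t, Y t) → ℝ,
      Measurable[(coordσ X τ).comap Prod.fst] a ∧ (∃ M, ∀ ω, |a ω| ≤ M) ∧ f = a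
  else
    ∃ a : (∀ t, X t) × (∀ t, Y t) → ℝ,
      Measurable[((pastσ X (τ : ℕ) ⊔ coordσ X τ).comap Prod.fst) ⊔
        ((pastσ Y (τ : ℕ)).comap Prod.snd)] a ∧ (∃ M, ∀ ω, |a ω| ≤ M) ∧
      f = fun ω => a ω - ∫ x', a (Function.update ω.1 τ x', ω.2) ∂(Kμ τ ω.1)

open Classical in
/-- Membership in the dual building block `A_{Y,ν,t}` (symmetric to `MemAX`). -/
def MemAY (Kν : ∀ t : Fin N, (∀ s, Y s) → Measure (Y t)) (τ : Fin N)
    (f : (∀ t, X t) × (∀ t, Y t) → ℝ) : Prop :=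
  if (τ : ℕ) = 0 then
    ∃ a : (∀ t, X t) × (∀ t, Y t) → ℝ,
      Measurable[(coordσ Y τ).comap Prod.snd] a ∧ (∃ M, ∀ ω, |a ω| ≤ M) ∧ f = a
  else
    ∃ a : (∀ t, X t) × (∀ t, Y t) → ℝ,
      Measurable[((pastσ X (τ : ℕ)).comap Prod.fst) ⊔
        ((pastσ Y (τ : ℕ) ⊔ coordσ Y τ).comap Prod.snd)] a ∧ (∃ M, ∀ ω, |a ω| ≤ M) ∧
      f = fun ω => a ω - ∫ y', a (ω.1, Function.update ω.2 τ y') ∂(Kν τ ω.2)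

/-- The dual space `S_{X,μ}`: sums `∑_{t=1}^N f_t` with `f_t ∈ A_{X,μ,t}`. -/
def MemSXμ (Kμ : ∀ t : Fin N, (∀ s, X s) → Measure (X t))
    (s : (∀ t, X t) × (∀ t, Y t) → ℝ) : Prop :=
  ∃ f : Fin N → ((∀ t, X t) × (∀ t, Y t) → ℝ),
    (∀ τ, MemAX Kμ τ (f τ)) ∧ s = fun ω => ∑ τ, f τ ω

/-- The dual space `S_{Y,ν}`: sums `∑_{t=1}^N g_t` with `g_t ∈ A_{Y,ν,t}`. -/
def MemSYν (Kν : ∀ t : Fin N, (∀ s, Y s) → Measure (Y t))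
    (s : (∀ t, X t) × (∀ t, Y t) → ℝ) : Prop :=
  ∃ g : Fin N → ((∀ t, X t) × (∀ t, Y t) → ℝ),
    (∀ τ, MemAY Kν τ (g τ)) ∧ s = fun ω => ∑ τ, g τ ω

/-- The space `S_X` of bounded measurable functions depending only on `x`. -/
def MemSX (s : (∀ t, X t) × (∀ t, Y t) → ℝ) : Prop :=
  ∃ g : (∀ t, X t) → ℝ, Measurable g ∧ (∃ M, ∀ x, |g x| ≤ M) ∧ s = fun ω => g ω.1

/-- The space `S_Y` of bounded measurable functions depending only on `y`. -/
def MemSY (s : (∀ t, X t) × (∀ t, Y t) → ℝ) : Prop :=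
  ∃ g : (∀ t, Y t) → ℝ, Measurable g ∧ (∃ M, ∀ y, |g y| ≤ M) ∧ s = fun ω => g ω.2

/-- The dual space `H_•`: `H = S_X ⊕ S_Y`, `H_c = S_{X,μ} ⊕ S_Y`, `H_{ac} = S_X ⊕ S_{Y,ν}`,
`H_{bc} = S_{X,μ} ⊕ S_{Y,ν}`. -/
def MemH (Kμ : ∀ t : Fin N, (∀ s, X s) → Measure (X t))
    (Kν : ∀ t : Fin N, (∀ s, Y s) → Measure (Y t)) :
    Flavor → ((∀ t, X t) × (∀ t, Y t) → ℝ) → Prop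
  | .plain => fun h => ∃ sX sY, MemSX (X := X) (Y := Y) sX ∧ MemSY sY ∧
      h = fun ω => sX ω + sY ω
  | .causal => fun h => ∃ sX sY, MemSXμ Kμ sX ∧ MemSY sY ∧ h = fun ω => sX ω + sY ω
  | .anticausal => fun h => ∃ sX sY, MemSX (X := X) (Y := Y) sX ∧ MemSYν Kν sY ∧
      h = fun ω => sX ω + sY ω
  | .bicausal => fun h => ∃ sX sY, MemSXμ Kμ sX ∧ MemSYν Kν sY ∧ h = fun ω => sX ω + sY ω

/-- The set `Π_c(μ, ∗)` of causal measures with first marginal `μ` and arbitrary second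
marginal. -/
def causalFirst (μ : Measure (∀ t, X t)) : Set (Measure ((∀ t, X t) × (∀ t, Y t))) :=
  {π | π.map Prod.fst = μ ∧ IsCausal π}

/-- The set `Π(∗, ν)` of couplings with arbitrary first marginal and second marginal `ν`. -/
def secondMarg (ν : Measure (∀ t, Y t)) : Set (Measure ((∀ t, X t) × (∀ t, Y t))) :=
  {π | π.map Prod.snd = ν}

/-- The set `Π_{ac}(∗, ν)` of anticausal measures with second marginal `ν`. -/
def anticausalSecond (ν : Measure (∀ t, Y t)) : Set (Measure ((∀ t, X t) × (∀ t, Y t))) :=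
  {π | π.map Prod.snd = ν ∧ IsAnticausal π}

/-- The reference measure `P_c` with `dP_c/dP = exp(-c)/∫ exp(-c) dP`. -/
def Pc {Ω : Type*} [MeasurableSpace Ω] (P : Measure Ω) (c : Ω → ℝ) : Measure Ω :=
  P.withDensity
    (fun ω => ENNReal.ofReal (Real.exp (-c ω)) / ∫⁻ ω', ENNReal.ofReal (Real.exp (-c ω')) ∂P)

/-- Sinkhorn's algorithm: `full 0 = π0`; `half k` is the `D_KL`-projection of `full k`
onto `Q1`, and `full (k+1)` is the `D_KL`-projection of `half k` onto `Q2`. -/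
structure IsSinkhorn {Ω : Type*} [MeasurableSpace Ω] (Q1 Q2 : Set (Measure Ω))
    (π0 : Measure Ω) (full half : ℕ → Measure Ω) : Prop where
  init : full 0 = π0
  half_mem : ∀ k, half k ∈ Q1
  half_opt : ∀ k, ∀ ρ ∈ Q1, KL (half k) (full k) ≤ KL ρ (full k)
  full_mem : ∀ k, full (k + 1) ∈ Q2
  full_opt : ∀ k, ∀ ρ ∈ Q2, KL (full (k + 1)) (half k) ≤ KL ρ (half k)

/-- The second projection set of Sinkhorn's algorithm: `Π(∗, ν)` for the causal problem and
`Π_{ac}(∗, ν)` for the bicausal problem. -/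
def sinkQ2 (b : Flavor) (ν : Measure (∀ t, Y t)) : Set (Measure ((∀ t, X t) × (∀ t, Y t))) :=
  match b with
  | .bicausal => anticausalSecond ν
  | _ => secondMarg ν

/-- The dual class of the second Sinkhorn potential: `S_Y` for the causal problem,
`S_{Y,ν}` for the bicausal problem. -/
def MemG (Kν : ∀ t : Fin N, (∀ s, Y s) → Measure (Y t)) :
    Flavor → ((∀ t, X t) × (∀ t, Y t) → ℝ) → Prop
  | .bicausal => fun g => MemSYν Kν g
  | _ => fun g => MemSY g

/-- Real-valued entropic transport value (`ε = 1`), the infimum being taken over couplings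
with finite relative entropy. -/
def Efin (b : Flavor) (μ : Measure (∀ t, X t)) (ν : Measure (∀ t, Y t))
    (c : (∀ t, X t) × (∀ t, Y t) → ℝ) : ℝ :=
  ⨅ π : {π : Measure ((∀ t, X t) × (∀ t, Y t)) //
      π ∈ aCouplings b μ ν ∧ KL π (μ.prod ν) ≠ ⊤},
    (∫ z, c z ∂π.1 + (KL π.1 (μ.prod ν)).toReal)

section DP

lemma aux_mul_log_ge {x : ℝ} (hx : 0 ≤ x) : -1 ≤ x * Real.log x := by
  rcases eq_or_lt_of_le hx with h | h
  · simp [← h]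
  · have h1 : Real.log x⁻¹ ≤ x⁻¹ - 1 := Real.log_le_sub_one_of_pos (inv_pos.2 h)
    rw [Real.log_inv] at h1
    have h3 : x * x⁻¹ = 1 := mul_inv_cancel₀ h.ne'
    nlinarith

lemma aux_integrable_integral_compProd {α β E : Type*} [MeasurableSpace α] [MeasurableSpace β]
    [NormedAddCommGroup E] [NormedSpace ℝ E]
    {μ : Measure α} [SFinite μ] {κ : Kernel α β} [IsSFiniteKernel κ]
    {f : α × β → E} (hf : Integrable f (μ ⊗ₘ κ)) :
    Integrable (fun x => ∫ y, f (x, y) ∂κ x) μ := by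
  rw [Measure.compProd] at hf
  have := hf.integral_compProd
  simpa [Kernel.prodMkLeft_apply, Kernel.const_apply] using this

/-- The data processing inequality for `KL` under a common Markov kernel. -/
lemma KL_map_le {Ω Ω' : Type*} [MeasurableSpace Ω] [StandardBorelSpace Ω] [Nonempty Ω]
    [MeasurableSpace Ω']
    (π κ : Measure Ω) [IsProbabilityMeasure π] [IsProbabilityMeasure κ]
    (K : Kernel Ω Ω') [IsMarkovKernel K] :
    KL ((π ⊗ₘ K).map Prod.snd) ((κ ⊗ₘ K).map Prod.snd) ≤ KL π κ := by
  classical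
  by_cases h : π ≪ κ ∧ Integrable (llr π κ) π
  swap
  · have hT : KL π κ = ⊤ := by rw [KL, if_neg h]
    rw [hT]; exact le_top
  obtain ⟨hac, hint⟩ := h
  set f : Ω → ℝ≥0∞ := π.rnDeriv κ with hf_def
  have hf_meas : Measurable f := Measure.measurable_rnDeriv π κ
  have hfπ : κ.withDensity f = π := Measure.withDensity_rnDeriv_eq π κ hac
  have hf_lt : ∀ᵐ x ∂κ, f x < ∞ := Measure.rnDeriv_lt_top π κ
  set πK : Measure Ω' := (π ⊗ₘ K).map Prod.snd with hπK_def
  set κK : Measure Ω' := (κ ⊗ₘ K).map Prod.snd with hκK_def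
  have hπKp : IsProbabilityMeasure πK := Measure.isProbabilityMeasure_map measurable_snd.aemeasurable
  have hκKp : IsProbabilityMeasure κK := Measure.isProbabilityMeasure_map measurable_snd.aemeasurable
  -- marginal formula
  have hπK_app : ∀ s : Set Ω', MeasurableSet s → πK s = ∫⁻ x, K x s ∂π := by
    intro s hs
    rw [hπK_def, Measure.map_apply measurable_snd hs,
      Measure.compProd_apply (measurable_snd hs)]
    rfl
  -- the swapped measure and its disintegration
  set ρ : Measure (Ω' × Ω) := (κ ⊗ₘ K).map Prod.swap with hρ_def
  have hρp : IsProbabilityMeasure ρ := Measure.isProbabilityMeasure_map measurable_swap.aemeasurable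
  have hρ_fst : ρ.fst = κK := by
    rw [hρ_def, Measure.fst_map_swap]; rfl
  set L : Kernel Ω' Ω := ρ.condKernel with hL_def
  have hρ_eq : κK ⊗ₘ L = ρ := by
    rw [← hρ_fst]; exact ρ.disintegrate L
  -- generic fiber integral identity
  have key : ∀ h : Ω → ℝ≥0∞, Measurable h →
      ∫⁻ y, ∫⁻ x, h x ∂(L y) ∂κK = ∫⁻ x, h x ∂κ := by
    intro h hh
    have h1 : ∫⁻ z, h z.2 ∂(κK ⊗ₘ L) = ∫⁻ y, ∫⁻ x, h x ∂(L y) ∂κK :=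
      Measure.lintegral_compProd (hh.comp measurable_snd)
    have h2 : ∫⁻ z : Ω' × Ω, h z.2 ∂((κ ⊗ₘ K).map Prod.swap) = ∫⁻ z : Ω × Ω', h z.1 ∂(κ ⊗ₘ K) :=
      lintegral_map (hh.comp measurable_snd) measurable_swap
    have h3 : ∫⁻ z : Ω × Ω', h z.1 ∂(κ ⊗ₘ K) = ∫⁻ x, ∫⁻ _, h x ∂(K x) ∂κ :=
      Measure.lintegral_compProd (hh.comp measurable_fst)
    rw [← h1, hρ_eq, hρ_def, h2, h3]
    simp
  -- the density of πK with respect to κK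
  set g : Ω' → ℝ≥0∞ := fun y => ∫⁻ x, f x ∂(L y) with hg_def
  have hg_meas : Measurable g := Measurable.lintegral_kernel hf_meas
  have hgA : κK.withDensity g = πK := by
    ext s hs
    rw [withDensity_apply _ hs]
    have e1 : ∫⁻ z : Ω' × Ω in s ×ˢ univ, f z.2 ∂(κK ⊗ₘ L)
        = ∫⁻ y in s, ∫⁻ x in univ, f x ∂(L y) ∂κK :=
      Measure.setLIntegral_compProd (hf_meas.comp measurable_snd) hs MeasurableSet.univ
    have e2 : ∫⁻ z : Ω' × Ω in s ×ˢ univ, f z.2 ∂((κ ⊗ₘ K).map Prod.swap)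
        = ∫⁻ z : Ω × Ω' in Prod.swap ⁻¹' (s ×ˢ univ), f z.1 ∂(κ ⊗ₘ K) :=
      setLIntegral_map (hs.prod MeasurableSet.univ) (hf_meas.comp measurable_snd) measurable_swap
    have hset : (Prod.swap ⁻¹' (s ×ˢ (univ : Set Ω)) : Set (Ω × Ω')) = (univ : Set Ω) ×ˢ s := by
      ext z; simp [Set.mem_prod]
    have e3 : ∫⁻ z : Ω × Ω' in univ ×ˢ s, f z.1 ∂(κ ⊗ₘ K)
        = ∫⁻ x in univ, ∫⁻ _ in s, f x ∂(K x) ∂κ :=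
      Measure.setLIntegral_compProd (hf_meas.comp measurable_fst) MeasurableSet.univ hs
    have e4 : ∫⁻ x, f x * K x s ∂κ = ∫⁻ x, K x s ∂π := by
      rw [← hfπ, lintegral_withDensity_eq_lintegral_mul _ hf_meas (Kernel.measurable_coe K hs)]
      rfl
    have e5 : ∫⁻ y in s, g y ∂κK = ∫⁻ y in s, ∫⁻ x in univ, f x ∂(L y) ∂κK := by
      simp [hg_def]
    rw [e5, ← e1, hρ_eq, hρ_def, e2, hset, e3]
    simp only [Measure.restrict_univ, setLIntegral_const]
    rw [e4, ← hπK_app s hs]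
  have hacK : πK ≪ κK := hgA ▸ withDensity_absolutelyContinuous _ _
  have hg_rn : πK.rnDeriv κK =ᵐ[κK] g := by
    rw [← hgA]; exact Measure.rnDeriv_withDensity κK hg_meas
  have hg_one : ∫⁻ y, g y ∂κK = 1 := by
    rw [key f hf_meas, Measure.lintegral_rnDeriv hac, measure_univ]
  have hg_lt : ∀ᵐ y ∂κK, g y < ∞ := ae_lt_top hg_meas (by rw [hg_one]; exact ENNReal.one_ne_top)
  -- the real density function and its x log x transform
  set F : Ω → ℝ := fun x => (f x).toReal * Real.log (f x).toReal with hF_def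
  have hF_meas : Measurable F :=
    (hf_meas.ennreal_toReal).mul (Real.measurable_log.comp hf_meas.ennreal_toReal)
  have hllr : llr π κ = fun x => Real.log (f x).toReal := rfl
  have hF_norm : ∀ᵐ x ∂κ, ‖F x‖ₑ = f x * ENNReal.ofReal |Real.log (f x).toReal| := by
    filter_upwards [hf_lt] with x hx
    rw [Real.enorm_eq_ofReal_abs, hF_def]
    rw [abs_mul, abs_of_nonneg ENNReal.toReal_nonneg,
      ENNReal.ofReal_mul ENNReal.toReal_nonneg, ENNReal.ofReal_toReal hx.ne]
  have hF_int : Integrable F κ := by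
    refine ⟨hF_meas.aestronglyMeasurable, ?_⟩
    have hw : ∫⁻ a, f a * ENNReal.ofReal |Real.log (f a).toReal| ∂κ
        = ∫⁻ a, ENNReal.ofReal |Real.log (f a).toReal| ∂(κ.withDensity f) :=
      (lintegral_withDensity_eq_lintegral_mul _ hf_meas
        (ENNReal.measurable_ofReal.comp ((measurable_llr π κ).abs))).symm
    rw [HasFiniteIntegral, lintegral_congr_ae hF_norm, hw, hfπ]
    have hnn : ∀ x, ENNReal.ofReal |Real.log (f x).toReal| = ‖llr π κ x‖ₑ := fun x =>
      (Real.enorm_eq_ofReal_abs _).symm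
    simp only [hnn]
    exact hint.2
  have hF_eq : ∫ x, F x ∂κ = ∫ x, llr π κ x ∂π := by
    rw [← integral_rnDeriv_smul hac (f := llr π κ)]
    rfl
  -- integrability over the product spaces
  have hFfst_int : Integrable (fun z : Ω × Ω' => F z.1) (κ ⊗ₘ K) := by
    refine (Measure.integrable_compProd_iff (f := fun z : Ω × Ω' => F z.1)
      (hF_meas.comp measurable_fst).aestronglyMeasurable).2 ⟨?_, ?_⟩
    · exact Eventually.of_forall fun x => integrable_const (F x)
    · simp only [integral_const, measure_univ, probReal_univ, ENNReal.toReal_one, smul_eq_mul, one_mul]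
      exact hF_int.norm
  have hFρ_int : Integrable (fun z : Ω' × Ω => F z.2) ((κ ⊗ₘ K).map Prod.swap) :=
    (integrable_map_measure (hF_meas.comp measurable_snd).aestronglyMeasurable
      measurable_swap.aemeasurable).2 hFfst_int
  have hFρ'_int : Integrable (fun z : Ω' × Ω => F z.2) (κK ⊗ₘ L) := by
    rw [hρ_eq, hρ_def]; exact hFρ_int
  set R : Ω' → ℝ := fun y => ∫ x, F x ∂(L y) with hR_def
  have hR_int : Integrable R κK := aux_integrable_integral_compProd hFρ'_int
  have hR_eq : ∫ y, R y ∂κK = ∫ x, llr π κ x ∂π := by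
    have i1 : ∫ z : Ω' × Ω, F z.2 ∂(κK ⊗ₘ L) = ∫ y, R y ∂κK :=
      Measure.integral_compProd hFρ'_int
    have i2 : ∫ z : Ω' × Ω, F z.2 ∂((κ ⊗ₘ K).map Prod.swap) = ∫ z : Ω × Ω', F z.1 ∂(κ ⊗ₘ K) :=
      integral_map measurable_swap.aemeasurable
        (hF_meas.comp measurable_snd).aestronglyMeasurable
    have i3 : ∫ z : Ω × Ω', F z.1 ∂(κ ⊗ₘ K) = ∫ x, ∫ _, F x ∂(K x) ∂κ :=
      Measure.integral_compProd hFfst_int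
    rw [← i1, hρ_eq, hρ_def, i2, i3, ← hF_eq]
    simp
  -- a.e. facts for Jensen's inequality
  have hfinf : κ (f ⁻¹' {∞}) = 0 := by
    have : {x | ¬ f x < ∞} = f ⁻¹' {∞} := by
      ext x; simp [not_lt, top_le_iff]
    have h := hf_lt
    rw [ae_iff, this] at h
    exact h
  have e1 : ∀ᵐ y ∂κK, ∀ᵐ x ∂(L y), f x < ∞ := by
    have hms : MeasurableSet (f ⁻¹' {∞}) := hf_meas (measurableSet_singleton ∞)
    have k0 : ∫⁻ y, (L y) (f ⁻¹' {∞}) ∂κK = 0 := by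
      have := key ((f ⁻¹' {∞}).indicator 1) (measurable_one.indicator hms)
      simp only [lintegral_indicator_one hms] at this
      rw [this, hfinf]
    have := (lintegral_eq_zero_iff (Kernel.measurable_coe L hms)).1 k0
    filter_upwards [this] with y hy
    rw [ae_iff]
    convert hy using 2
    ext x; simp [not_lt, top_le_iff]
    rfl
  have e3 : ∀ᵐ y ∂κK, ∫⁻ x, ‖F x‖ₑ ∂(L y) < ∞ := by
    refine ae_lt_top (Measurable.lintegral_kernel hF_meas.enorm) ?_
    rw [key _ hF_meas.enorm]
    exact hF_int.2.ne
  -- Jensen's inequality, fiberwise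
  have hJ : ∀ᵐ y ∂κK, (g y).toReal * Real.log (g y).toReal ≤ R y := by
    filter_upwards [e1, hg_lt, e3] with y h1 h2 h3
    have hfi : Integrable (fun x => (f x).toReal) (L y) := by
      refine ⟨(hf_meas.ennreal_toReal).aestronglyMeasurable, ?_⟩
      rw [HasFiniteIntegral]
      calc ∫⁻ x, ‖(f x).toReal‖ₑ ∂(L y)
          ≤ ∫⁻ x, f x ∂(L y) := by
            refine lintegral_mono fun x => ?_
            rw [Real.enorm_eq_ofReal ENNReal.toReal_nonneg]
            exact ENNReal.ofReal_toReal_le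
        _ < ∞ := h2
    have hFi : Integrable F (L y) := ⟨hF_meas.aestronglyMeasurable, h3⟩
    have havg := Real.convexOn_mul_log.map_average_le Real.continuous_mul_log.continuousOn
      isClosed_Ici (Eventually.of_forall fun x => ENNReal.toReal_nonneg (a := f x)) hfi hFi
    rw [average_eq_integral, average_eq_integral] at havg
    have hieq : ∫ x, (f x).toReal ∂(L y) = (g y).toReal :=
      integral_toReal hf_meas.aemeasurable h1
    rw [hieq] at havg
    exact havg
  -- integrability of the transformed density of the marginals
  have hphig_meas : Measurable fun y => (g y).toReal * Real.log (g y).toReal :=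
    (hg_meas.ennreal_toReal).mul (Real.measurable_log.comp hg_meas.ennreal_toReal)
  have hphig_int : Integrable (fun y => (g y).toReal * Real.log (g y).toReal) κK := by
    refine Integrable.mono' (hR_int.norm.add (integrable_const 1))
      hphig_meas.aestronglyMeasurable ?_
    filter_upwards [hJ] with y hy
    have hlow : -1 ≤ (g y).toReal * Real.log (g y).toReal :=
      aux_mul_log_ge ENNReal.toReal_nonneg
    simp only [Real.norm_eq_abs, Pi.add_apply]
    rw [abs_le]
    refine ⟨?_, ?_⟩
    · have h1 := neg_abs_le (R y)
      have h2 := abs_nonneg (R y)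
      linarith
    · have h2 := le_abs_self (R y)
      linarith
  -- transfer to llr of the marginals
  have hsmul_eq : (fun y => (πK.rnDeriv κK y).toReal • llr πK κK y)
      =ᵐ[κK] fun y => (g y).toReal * Real.log (g y).toReal := by
    filter_upwards [hg_rn] with y hy
    rw [smul_eq_mul]
    unfold llr
    rw [hy]
  have hintK : Integrable (llr πK κK) πK := by
    rw [← integrable_rnDeriv_smul_iff hacK]
    exact hphig_int.congr hsmul_eq.symm
  have hI1 : ∫ y, llr πK κK y ∂πK = ∫ y, (g y).toReal * Real.log (g y).toReal ∂κK := by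
    rw [← integral_rnDeriv_smul hacK (f := llr πK κK)]
    exact integral_congr_ae hsmul_eq
  have hfinal : ∫ y, llr πK κK y ∂πK ≤ ∫ x, llr π κ x ∂π := by
    rw [hI1, ← hR_eq]
    exact integral_mono_ae hphig_int hR_int hJ
  have hKL1 : KL π κ = ENNReal.ofReal (∫ x, llr π κ x ∂π) := by
    rw [KL, if_pos ⟨hac, hint⟩]
  have hKL2 : KL πK κK = ENNReal.ofReal (∫ y, llr πK κK y ∂πK) := by
    rw [KL, if_pos ⟨hacK, hintK⟩]
  rw [hKL1, hKL2]
  exact ENNReal.ofReal_le_ofReal hfinal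

lemma shadow_prod_eq {A A' B B' : Type*} [MeasurableSpace A] [MeasurableSpace A']
    [MeasurableSpace B] [MeasurableSpace B']
    (μ : Measure A) (ν : Measure B) [IsProbabilityMeasure μ] [IsProbabilityMeasure ν]
    (μ' : Measure A') (ν' : Measure B') [IsProbabilityMeasure μ'] [IsProbabilityMeasure ν']
    (Kμ : Kernel A A') [IsMarkovKernel Kμ] (Kν : Kernel B B') [IsMarkovKernel Kν]
    (hγ : (μ ⊗ₘ Kμ).map Prod.snd = μ') (hγ' : (ν ⊗ₘ Kν).map Prod.snd = ν') :
    shadow (μ.prod ν) Kμ Kν = μ'.prod ν' := by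
  haveI hMk : IsMarkovKernel (shadowKernel Kμ Kν) := by
    unfold shadowKernel; infer_instance
  have hK : ∀ z : A × B, shadowKernel Kμ Kν z = (Kμ z.1).prod (Kν z.2) := fun z => by
    rw [shadowKernel, Kernel.prod_apply, Kernel.comap_apply, Kernel.comap_apply]
  refine (Measure.prod_eq fun s t hs ht => ?_).symm
  have h1 : shadow (μ.prod ν) Kμ Kν (s ×ˢ t)
      = ∫⁻ z, shadowKernel Kμ Kν z (s ×ˢ t) ∂(μ.prod ν) := by
    rw [shadow, Measure.map_apply measurable_snd (hs.prod ht),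
      Measure.compProd_apply (measurable_snd (hs.prod ht))]
    rfl
  have h2 : ∀ z : A × B, shadowKernel Kμ Kν z (s ×ˢ t) = Kμ z.1 s * Kν z.2 t := fun z => by
    rw [hK z, Measure.prod_prod]
  have m1 : ∫⁻ x, Kμ x s ∂μ = μ' s := by
    rw [← hγ, Measure.map_apply measurable_snd hs, Measure.compProd_apply (measurable_snd hs)]
    rfl
  have m2 : ∫⁻ y, Kν y t ∂ν = ν' t := by
    rw [← hγ', Measure.map_apply measurable_snd ht, Measure.compProd_apply (measurable_snd ht)]
    rfl
  rw [h1]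
  simp only [h2]
  rw [lintegral_prod_mul (Kernel.measurable_coe Kμ hs).aemeasurable
    (Kernel.measurable_coe Kν ht).aemeasurable, m1, m2]

end DP

/-- The shadow contracts relative entropy: if `π̃`, `κ̃` are the
`(K^μ, K^ν)`-shadows of `π, κ ∈ Π(μ, ν)`, then `D_KL(π̃, κ̃) ≤ D_KL(π, κ)`; in particular,
since `μ̃ ⊗ ν̃` is the shadow of `μ ⊗ ν`, `D_KL(π̃, μ̃ ⊗ ν̃) ≤ D_KL(π, μ ⊗ ν)`. -/
theorem stmt_2 {N : ℕ} (X Y : Fin N → Type*)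
    [∀ t, MeasurableSpace (X t)] [∀ t, MetricSpace (X t)]
    [∀ t, PolishSpace (X t)] [∀ t, BorelSpace (X t)]
    [∀ t, MeasurableSpace (Y t)] [∀ t, MetricSpace (Y t)]
    [∀ t, PolishSpace (Y t)] [∀ t, BorelSpace (Y t)]
    (p : ℝ) (hp : 1 ≤ p)
    (μ μ' : Measure (∀ t, X t)) (ν ν' : Measure (∀ t, Y t))
    [IsProbabilityMeasure μ] [IsProbabilityMeasure μ']
    [IsProbabilityMeasure ν] [IsProbabilityMeasure ν']
    (hμp : MemPp p μ) (hμ'p : MemPp p μ') (hνp : MemPp p ν) (hν'p : MemPp p ν')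
    (Kμ : Kernel (∀ t, X t) (∀ t, X t)) [IsMarkovKernel Kμ]
    (Kν : Kernel (∀ t, Y t) (∀ t, Y t)) [IsMarkovKernel Kν]
    (hγ : IsCoupling μ μ' (μ ⊗ₘ Kμ)) (hγ' : IsCoupling ν ν' (ν ⊗ₘ Kν))
    (π κ : Measure ((∀ t, X t) × (∀ t, Y t)))
    (hπ : π ∈ aCouplings .plain μ ν) (hκ : κ ∈ aCouplings .plain μ ν) :
    KL (shadow π Kμ Kν) (shadow κ Kμ Kν) ≤ KL π κ ∧
      KL (shadow π Kμ Kν) (μ'.prod ν') ≤ KL π (μ.prod ν) := by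
  obtain ⟨⟨hπ1, hπ2⟩, -⟩ := hπ
  obtain ⟨⟨hκ1, hκ2⟩, -⟩ := hκ
  haveI hπp : IsProbabilityMeasure π := by
    constructor
    have := congrArg (fun m : Measure (∀ t, X t) => m Set.univ) hπ1
    simpa [Measure.map_apply measurable_fst MeasurableSet.univ] using this
  haveI hκp : IsProbabilityMeasure κ := by
    constructor
    have := congrArg (fun m : Measure (∀ t, X t) => m Set.univ) hκ1
    simpa [Measure.map_apply measurable_fst MeasurableSet.univ] using this
  haveI hne : Nonempty ((∀ t, X t) × (∀ t, Y t)) := by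
    have h1 : Nonempty (∀ t, X t) := by
      by_contra hc
      rw [not_nonempty_iff] at hc
      have h := (measure_univ : μ Set.univ = 1)
      rw [Set.univ_eq_empty_iff.2 hc, measure_empty] at h
      exact zero_ne_one h
    have h2 : Nonempty (∀ t, Y t) := by
      by_contra hc
      rw [not_nonempty_iff] at hc
      have h := (measure_univ : ν Set.univ = 1)
      rw [Set.univ_eq_empty_iff.2 hc, measure_empty] at h
      exact zero_ne_one h
    exact ⟨⟨h1.some, h2.some⟩⟩
  haveI hMk : IsMarkovKernel (shadowKernel Kμ Kν) := by
    unfold shadowKernel; infer_instance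
  constructor
  · exact KL_map_le π κ (shadowKernel Kμ Kν)
  · have h3 : shadow (μ.prod ν) Kμ Kν = μ'.prod ν' :=
      shadow_prod_eq μ ν μ' ν' Kμ Kν hγ.2 hγ'.2
    rw [← h3]
    exact KL_map_le π (μ.prod ν) (shadowKernel Kμ Kν)

end AOT
end
end

section
/- Let p ∈ [1, ∞), μ, μ̃ ∈ P_p(X), ν, ν̃ ∈ P_p(Y), π ∈ Π(μ, ν), γ = μ ⊗ K^μ ∈ Π(μ, μ̃), γ' = ν ⊗ K^ν ∈ Π(ν, ν̃), let π̃ be the (K^μ, K^ν)-shadow of π, K(x, y) := K^μ(x) ⊗ K^ν(y), and θ := π ⊗ K ∈ Π(π, π̃). If μ ⊗ K^μ and ν ⊗ K^ν are causal, then θ ∈ Π_c(π, π̃). If moreover μ ⊗ K^μ is W_{p,c}(μ, μ̃)-optimal and ν ⊗ K^ν is W_{p,c}(ν, ν̃)-optimal, then W_{p,c}(π, π̃)^p ≤ W_{p,c}(μ, μ̃)^p + W_{p,c}(ν, ν̃)^p. -/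
open MeasureTheory ProbabilityTheory Filter Set
open scoped ENNReal NNReal Topology ProbabilityTheory

noncomputable section

namespace AOT

variable {N : ℕ}

variable {X Y : Fin N → Type*} [∀ t, MeasurableSpace (X t)] [∀ t, MeasurableSpace (Y t)]

section Helpers

variable {Ω : Type*}

lemma pastσOf_mono {m : Fin N → MeasurableSpace Ω} {s t : ℕ} (h : s ≤ t) :
    pastσOf m s ≤ pastσOf m t :=
  iSup_le fun u => iSup_le fun hu => le_iSup_of_le u (le_iSup_of_le (lt_of_lt_of_le hu h) le_rfl)

lemma coordσ_le_pastσOf {m : Fin N → MeasurableSpace Ω} {u : Fin N} {t : ℕ} (h : (u : ℕ) < t) :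
    m u ≤ pastσOf m t := le_iSup_of_le u (le_iSup_of_le h le_rfl)

lemma pastσOf_succ {m : Fin N → MeasurableSpace Ω} {s : ℕ} (hs : s < N) :
    pastσOf m (s + 1) = pastσOf m s ⊔ m ⟨s, hs⟩ := by
  apply le_antisymm
  · refine iSup_le fun u => iSup_le fun hu => ?_
    rcases Nat.lt_succ_iff_lt_or_eq.mp hu with h | h
    · exact le_sup_of_le_left (coordσ_le_pastσOf h)
    · have hu' : u = ⟨s, hs⟩ := Fin.ext h
      exact hu' ▸ le_sup_right
  · exact sup_le (pastσOf_mono (Nat.le_succ s)) (coordσ_le_pastσOf (Nat.lt_succ_self s))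

lemma pastσOf_succ_of_ge {m : Fin N → MeasurableSpace Ω} {s : ℕ} (hs : N ≤ s) :
    pastσOf m (s + 1) = pastσOf m s := by
  apply le_antisymm
  · exact iSup_le fun u => iSup_le fun _ =>
      coordσ_le_pastσOf (lt_of_lt_of_le u.isLt hs)
  · exact pastσOf_mono (Nat.le_succ s)

lemma pastσOf_le {m : Fin N → MeasurableSpace Ω} {m0 : MeasurableSpace Ω}
    (h : ∀ u, m u ≤ m0) (t : ℕ) : pastσOf m t ≤ m0 :=
  iSup_le fun u => iSup_le fun _ => h u

lemma coordσ_le {X : Fin N → Type*} [∀ t, MeasurableSpace (X t)] (t : Fin N) :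
    coordσ X t ≤ (inferInstance : MeasurableSpace (∀ s, X s)) :=
  (measurable_pi_apply t).comap_le

lemma pastσ_le {X : Fin N → Type*} [∀ t, MeasurableSpace (X t)] (t : ℕ) :
    pastσ X t ≤ (inferInstance : MeasurableSpace (∀ s, X s)) :=
  pastσOf_le coordσ_le t

lemma pastσ_N (X : Fin N → Type*) [∀ t, MeasurableSpace (X t)] :
    pastσ X N = (inferInstance : MeasurableSpace (∀ s, X s)) := by
  apply le_antisymm (pastσ_le N)
  show MeasurableSpace.pi ≤ _
  rw [MeasurableSpace.pi]
  exact iSup_le fun u => coordσ_le_pastσOf (m := coordσ X) u.isLt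

lemma eq_comp_fst_of_comap_fst_measurable {α β : Type*} {m : MeasurableSpace α}
    {F : α × β → ℝ} (hF : Measurable[m.comap Prod.fst] F) (a : α) (b b' : β) :
    F (a, b) = F (a, b') := by
  obtain ⟨s, -, hs⟩ := hF (measurableSet_singleton (F (a, b)))
  have h1 : (a, b) ∈ F ⁻¹' {F (a, b)} := rfl
  rw [← hs] at h1
  have h2 : (a, b') ∈ Prod.fst ⁻¹' s := h1
  rw [hs] at h2
  exact (Set.mem_singleton_iff.mp h2).symm

lemma measurable_of_comap {α β : Type*} {m : MeasurableSpace β} {f : α → β} :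
    Measurable[m.comap f, m] f := fun _s hs => ⟨_s, hs, rfl⟩

lemma measurable_comp_of_comap {α β δ : Type*} {m : MeasurableSpace β} [MeasurableSpace δ]
    {f : α → β} {g : β → δ} (hg : Measurable[m] g) : Measurable[m.comap f] (fun a => g (f a)) :=
  hg.comp measurable_of_comap

lemma integrable_indicator_one' {m0 : MeasurableSpace Ω} {π : Measure Ω}
    [IsFiniteMeasure π] {B : Set Ω} (hB : MeasurableSet B) :
    Integrable (B.indicator fun _ => (1 : ℝ)) π :=
  (integrable_const 1).indicator hB

lemma abs_indicator_one_le {B : Set Ω} (x : Ω) :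
    |B.indicator (fun _ => (1 : ℝ)) x| ≤ 1 := by
  by_cases h : x ∈ B <;> simp [Set.indicator_apply, h]

end Helpers

section CondExpHelpers

variable {Ω : Type*}

/-- Generating π-system for `m₁ ⊔ m₃`. -/
def interSet (m₁ m₃ : MeasurableSpace Ω) : Set (Set Ω) :=
  {S | ∃ A, MeasurableSet[m₁] A ∧ ∃ C, MeasurableSet[m₃] C ∧ S = A ∩ C}

lemma isPiSystem_interSet (m₁ m₃ : MeasurableSpace Ω) : IsPiSystem (interSet m₁ m₃) := by
  rintro S ⟨A, hA, C, hC, rfl⟩ S' ⟨A', hA', C', hC', rfl⟩ -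
  exact ⟨A ∩ A', hA.inter hA', C ∩ C', hC.inter hC', by ext x; simp; tauto⟩

lemma sup_eq_generateFrom_interSet (m₁ m₃ : MeasurableSpace Ω) :
    m₁ ⊔ m₃ = MeasurableSpace.generateFrom (interSet m₁ m₃) := by
  apply le_antisymm
  · refine sup_le (fun S hS => ?_) (fun S hS => ?_)
    · exact MeasurableSpace.measurableSet_generateFrom
        ⟨S, hS, Set.univ, MeasurableSet.univ, (Set.inter_univ S).symm⟩
    · exact MeasurableSpace.measurableSet_generateFrom
        ⟨Set.univ, MeasurableSet.univ, S, hS, (Set.univ_inter S).symm⟩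
  · refine MeasurableSpace.generateFrom_le ?_
    rintro S ⟨A, hA, C, hC, rfl⟩
    exact ((le_sup_left : m₁ ≤ m₁ ⊔ m₃) _ hA).inter ((le_sup_right : m₃ ≤ m₁ ⊔ m₃) _ hC)

lemma condexp_indicator_bdd {m m0 : MeasurableSpace Ω} {π : Measure Ω} {B : Set Ω} :
    ∀ᵐ x ∂π, ‖(π[B.indicator (fun _ => (1 : ℝ)) | m]) x‖ ≤ 1 := by
  have h := ae_bdd_condExp_of_ae_bdd (m := m) (μ := π) (R := 1)
    (f := B.indicator (fun _ => (1 : ℝ))) (Filter.Eventually.of_forall fun x => by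
      simpa using abs_indicator_one_le x)
  filter_upwards [h] with x hx
  simpa [Real.norm_eq_abs] using hx

lemma indicator_one_mul (A B : Set Ω) (x : Ω) :
    (A ∩ B).indicator (fun _ => (1 : ℝ)) x =
      A.indicator (fun _ => (1 : ℝ)) x * B.indicator (fun _ => (1 : ℝ)) x := by
  by_cases hA : x ∈ A <;> by_cases hB : x ∈ B <;>
    simp [Set.indicator_apply, hA, hB]

/-- Reduction of conditioning σ-algebra for conditionally independent events. -/
lemma condexp_sup_of_condIndep {m₁ m₂ m₃ m0 : MeasurableSpace Ω} {π : Measure Ω}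
    [IsProbabilityMeasure π]
    (h₁ : m₁ ≤ m0) (h₂ : m₂ ≤ m0) (h₃ : m₃ ≤ m0)
    (hCI : CondIndepσ m₁ m₂ m₃ π) {B : Set Ω} (hB : MeasurableSet[m₂] B) :
    π[B.indicator (fun _ => (1 : ℝ)) | m₁ ⊔ m₃] =ᵐ[π]
      π[B.indicator (fun _ => (1 : ℝ)) | m₃] := by
  set f := B.indicator (fun _ => (1 : ℝ)) with hf_def
  have h13 : m₁ ⊔ m₃ ≤ m0 := sup_le h₁ h₃
  have hfint : Integrable f π := integrable_indicator_one' (h₂ _ hB)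
  refine (ae_eq_condExp_of_forall_setIntegral_eq h13 hfint
    (fun s _ _ => integrable_condExp.integrableOn) ?_
    (((stronglyMeasurable_condExp (μ := π) (f := f) (m := m₃)).mono
      (le_sup_right : m₃ ≤ m₁ ⊔ m₃)).aestronglyMeasurable (μ := π))).symm
  intro S hS _
  revert S
  suffices h : ∀ ⦃S : Set Ω⦄, MeasurableSet[m₁ ⊔ m₃] S →
      ∫ x in S, (π[f|m₃]) x ∂π = ∫ x in S, f x ∂π by
    exact fun S hS _ => h hS
  refine MeasurableSpace.induction_on_inter (m := m₁ ⊔ m₃)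
    (C := fun S _ => ∫ x in S, (π[f|m₃]) x ∂π = ∫ x in S, f x ∂π)
    (sup_eq_generateFrom_interSet m₁ m₃) (isPiSystem_interSet m₁ m₃) (by simp) ?_ ?_ ?_
  · -- basic: S = A ∩ C
    rintro S ⟨A, hA, C, hC, rfl⟩
    have hA' : MeasurableSet A := h₁ _ hA
    have hC' : MeasurableSet C := h₃ _ hC
    have hg := stronglyMeasurable_condExp (μ := π) (f := f) (m := m₃)
    have hgA_int : Integrable (fun x => (π[f|m₃]) x * A.indicator (fun _ => (1 : ℝ)) x) π :=
      (integrable_indicator_one' hA').bdd_mul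
        (stronglyMeasurable_condExp.mono h₃).aestronglyMeasurable condexp_indicator_bdd
    -- LHS
    have hL : ∫ x in A ∩ C, (π[f|m₃]) x ∂π
        = ∫ x in C, (π[f|m₃]) x * A.indicator (fun _ => (1 : ℝ)) x ∂π := by
      rw [show (fun x => (π[f|m₃]) x * A.indicator (fun _ => (1 : ℝ)) x)
            = A.indicator (fun x => (π[f|m₃]) x) from ?_]
      · rw [setIntegral_indicator hA', Set.inter_comm]
      · funext x; by_cases hx : x ∈ A <;> simp [Set.indicator_apply, hx]
    have hpull : π[fun x => (π[f|m₃]) x * A.indicator (fun _ => (1 : ℝ)) x | m₃] =ᵐ[π]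
        fun x => (π[f|m₃]) x * (π[A.indicator (fun _ => (1 : ℝ)) | m₃]) x := by
      exact condExp_stronglyMeasurable_mul_of_bound h₃ stronglyMeasurable_condExp
        (integrable_indicator_one' hA') 1 condexp_indicator_bdd
    have hCIprod := hCI A B hA hB
    have step1 : ∫ x in C, (π[f|m₃]) x * A.indicator (fun _ => (1 : ℝ)) x ∂π
        = ∫ x in C, (π[fun x => (π[f|m₃]) x * A.indicator (fun _ => (1 : ℝ)) x | m₃]) x ∂π :=
      (setIntegral_condExp h₃ hgA_int hC).symm
    have step2 : ∫ x in C, (π[fun x => (π[f|m₃]) x * A.indicator (fun _ => (1 : ℝ)) x | m₃]) x ∂π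
        = ∫ x in C, (π[(A ∩ B).indicator (fun _ => (1 : ℝ)) | m₃]) x ∂π := by
      refine setIntegral_congr_ae hC' ?_
      filter_upwards [hpull, hCIprod] with x hx1 hx2
      intro _
      rw [hx1, hx2]
      simp only [Pi.mul_apply]
      ring
    have step3 : ∫ x in C, (π[(A ∩ B).indicator (fun _ => (1 : ℝ)) | m₃]) x ∂π
        = ∫ x in C, (A ∩ B).indicator (fun _ => (1 : ℝ)) x ∂π :=
      setIntegral_condExp h₃ (integrable_indicator_one' (hA'.inter (h₂ _ hB))) hC
    have step4 : ∫ x in C, (A ∩ B).indicator (fun _ => (1 : ℝ)) x ∂π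
        = ∫ x in A ∩ C, f x ∂π := by
      rw [setIntegral_indicator (hA'.inter (h₂ _ hB)), hf_def,
        setIntegral_indicator (h₂ _ hB)]
      rw [show C ∩ (A ∩ B) = A ∩ C ∩ B by ext x; simp only [Set.mem_inter_iff]; tauto]
    rw [hL, step1, step2, step3, step4]
  · -- compl
    intro S hS hSint
    have hS' : MeasurableSet S := h13 _ hS
    have e1 := integral_add_compl hS' (integrable_condExp (m := m₃) (f := f) (μ := π))
    have e2 := integral_add_compl hS' hfint
    have e3 : ∫ x, (π[f|m₃]) x ∂π = ∫ x, f x ∂π := integral_condExp h₃ (μ := π) (f := f)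
    linarith
  · -- iUnion
    intro g hdisj hmeas hint
    rw [integral_iUnion (fun i => h13 _ (hmeas i)) hdisj integrable_condExp.integrableOn,
      integral_iUnion (fun i => h13 _ (hmeas i)) hdisj hfint.integrableOn]
    exact tsum_congr hint

/-- The product-formula conditional independence follows from reduction of the conditioning
σ-algebra. -/
lemma condIndepσ_of_condexp_sup_eq {m₁ m₂ m₃ m0 : MeasurableSpace Ω} {π : Measure Ω}
    [IsProbabilityMeasure π]
    (h₁ : m₁ ≤ m0) (h₂ : m₂ ≤ m0) (h₃ : m₃ ≤ m0)
    (h : ∀ B : Set Ω, MeasurableSet[m₂] B →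
      π[B.indicator (fun _ => (1 : ℝ)) | m₁ ⊔ m₃] =ᵐ[π]
        π[B.indicator (fun _ => (1 : ℝ)) | m₃]) :
    CondIndepσ m₁ m₂ m₃ π := by
  intro A B hA hB
  have h13 : m₁ ⊔ m₃ ≤ m0 := sup_le h₁ h₃
  have hA' : MeasurableSet A := h₁ _ hA
  have hB' : MeasurableSet B := h₂ _ hB
  have hintB : Integrable (B.indicator fun _ => (1 : ℝ)) π := integrable_indicator_one' hB'
  have hintA : Integrable (A.indicator fun _ => (1 : ℝ)) π := integrable_indicator_one' hA'
  have hsmA : StronglyMeasurable[m₁ ⊔ m₃] (A.indicator fun _ => (1 : ℝ)) :=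
    stronglyMeasurable_const.indicator ((le_sup_left : m₁ ≤ m₁ ⊔ m₃) _ hA)
  have habs : ∀ᵐ x ∂π, ‖A.indicator (fun _ => (1 : ℝ)) x‖ ≤ 1 :=
    Filter.Eventually.of_forall fun x => by
      simpa [Real.norm_eq_abs] using abs_indicator_one_le (B := A) x
  -- Step: condexp at m₁ ⊔ m₃ of the product
  have key : π[(A ∩ B).indicator (fun _ => (1 : ℝ)) | m₁ ⊔ m₃] =ᵐ[π]
      (A.indicator fun _ => (1 : ℝ)) * π[B.indicator (fun _ => (1 : ℝ)) | m₃] := by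
    have e0 : (A ∩ B).indicator (fun _ => (1 : ℝ)) =
        (A.indicator fun _ => (1 : ℝ)) * (B.indicator fun _ => (1 : ℝ)) := by
      funext x; exact indicator_one_mul A B x
    calc π[(A ∩ B).indicator (fun _ => (1 : ℝ)) | m₁ ⊔ m₃]
        = π[(A.indicator fun _ => (1 : ℝ)) * (B.indicator fun _ => (1 : ℝ)) | m₁ ⊔ m₃] := by
          rw [e0]
      _ =ᵐ[π] (A.indicator fun _ => (1 : ℝ)) * π[B.indicator (fun _ => (1 : ℝ)) | m₁ ⊔ m₃] :=
          condExp_stronglyMeasurable_mul_of_bound h13 hsmA hintB 1 habs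
      _ =ᵐ[π] (A.indicator fun _ => (1 : ℝ)) * π[B.indicator (fun _ => (1 : ℝ)) | m₃] := by
          filter_upwards [h B hB] with x hx
          simp only [Pi.mul_apply, hx]
  calc π[(A ∩ B).indicator (fun _ => (1 : ℝ)) | m₃]
      =ᵐ[π] π[π[(A ∩ B).indicator (fun _ => (1 : ℝ)) | m₁ ⊔ m₃] | m₃] :=
        (condExp_condExp_of_le le_sup_right h13).symm
    _ =ᵐ[π] π[(A.indicator fun _ => (1 : ℝ)) * π[B.indicator (fun _ => (1 : ℝ)) | m₃] | m₃] :=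
        condExp_congr_ae key
    _ =ᵐ[π] π[(π[B.indicator (fun _ => (1 : ℝ)) | m₃]) * (A.indicator fun _ => (1 : ℝ)) | m₃] := by
        rw [mul_comm]
    _ =ᵐ[π] (π[B.indicator (fun _ => (1 : ℝ)) | m₃]) * π[A.indicator (fun _ => (1 : ℝ)) | m₃] :=
        condExp_stronglyMeasurable_mul_of_bound h₃ stronglyMeasurable_condExp hintA 1
          condexp_indicator_bdd
    _ = (π[A.indicator (fun _ => (1 : ℝ)) | m₃]) * π[B.indicator (fun _ => (1 : ℝ)) | m₃] := by
        rw [mul_comm]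

end CondExpHelpers

section CompProdCondexp

/-- Conditional expectation of `1_{snd ⁻¹ B}` under `μ ⊗ₘ κ` given a sub-σ-algebra of the first
coordinate, when `a ↦ κ a B` admits an `m`-measurable version `g`. -/
lemma condexp_snd_preimage_compProd {α β : Type*} {m : MeasurableSpace α}
    {mα : MeasurableSpace α} {mβ : MeasurableSpace β}
    (μ : Measure α) [IsProbabilityMeasure μ] (κ : Kernel α β) [IsMarkovKernel κ]
    (hm : m ≤ mα) {B : Set β} (hB : MeasurableSet B)
    {g : α → ℝ} (hgm : Measurable[m] g) (hg1 : ∀ a, |g a| ≤ 1)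
    (hg : (fun a => (κ a B).toReal) =ᵐ[μ] g) :
    (μ ⊗ₘ κ)[(Prod.snd ⁻¹' B).indicator (fun _ => (1 : ℝ)) | m.comap Prod.fst]
      =ᵐ[μ ⊗ₘ κ] fun z => g z.1 := by
  have hmf : m.comap Prod.fst ≤ (inferInstance : MeasurableSpace (α × β)) :=
    le_trans (MeasurableSpace.comap_mono hm) measurable_fst.comap_le
  have hmap : (μ ⊗ₘ κ).map Prod.fst = μ := Measure.fst_compProd μ κ
  have hgm' : Measurable (fun z : α × β => g z.1) := ((hgm.mono hm le_rfl).comp measurable_fst)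
  have hgint : Integrable (fun z : α × β => g z.1) (μ ⊗ₘ κ) :=
    (integrable_const (1 : ℝ)).mono' hgm'.aestronglyMeasurable
      (Filter.Eventually.of_forall fun z => by
        simpa [Real.norm_eq_abs] using hg1 z.1)
  refine (ae_eq_condExp_of_forall_setIntegral_eq hmf
    (integrable_indicator_one' (measurable_snd hB))
    (fun s _ _ => hgint.integrableOn) ?_
    ((measurable_comp_of_comap hgm).stronglyMeasurable.aestronglyMeasurable)).symm
  rintro S ⟨S₀, hS₀, rfl⟩ -
  have hS₀' : MeasurableSet S₀ := hm _ hS₀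
  have hR : ∫ z in Prod.fst ⁻¹' S₀, (Prod.snd ⁻¹' B).indicator (fun _ => (1 : ℝ)) z ∂(μ ⊗ₘ κ)
      = ((μ ⊗ₘ κ) (S₀ ×ˢ B)).toReal := by
    rw [setIntegral_indicator (measurable_snd hB), setIntegral_const, smul_eq_mul, mul_one,
      Set.prod_eq, measureReal_def]
  have hL : ∫ z in Prod.fst ⁻¹' S₀, g z.1 ∂(μ ⊗ₘ κ) = ∫ a in S₀, g a ∂μ := by
    conv_rhs => rw [← hmap]
    rw [setIntegral_map hS₀' ((hgm.mono hm le_rfl).aestronglyMeasurable)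
      measurable_fst.aemeasurable]
  rw [hR, hL, Measure.compProd_apply_prod hS₀' hB]
  have h1 : ∫ a in S₀, g a ∂μ = ∫ a in S₀, (κ a B).toReal ∂μ :=
    setIntegral_congr_ae hS₀' (by filter_upwards [hg] with a ha using fun _ => ha.symm)
  rw [h1, ← integral_toReal ((κ.measurable_coe hB).aemeasurable)
    (Filter.Eventually.of_forall fun a => measure_lt_top (κ a) B)]

end CompProdCondexp

section KernelVersion

lemma comap_fst_le' {α β : Type*} {m : MeasurableSpace α} {mα : MeasurableSpace α}
    {mβ : MeasurableSpace β} (h : m ≤ mα) :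
    m.comap (Prod.fst : α × β → α) ≤ (inferInstance : MeasurableSpace (α × β)) :=
  le_trans (MeasurableSpace.comap_mono h) measurable_fst.comap_le

lemma comap_snd_le' {α β : Type*} {m : MeasurableSpace β} {mα : MeasurableSpace α}
    {mβ : MeasurableSpace β} (h : m ≤ mβ) :
    m.comap (Prod.snd : α × β → β) ≤ (inferInstance : MeasurableSpace (α × β)) :=
  le_trans (MeasurableSpace.comap_mono h) measurable_snd.comap_le

lemma toReal_prob_le_one {α : Type*} {mα : MeasurableSpace α} {μ : Measure α}
    [IsProbabilityMeasure μ] (s : Set α) : (μ s).toReal ≤ 1 := by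
  have := prob_le_one (μ := μ) (s := s)
  have h := ENNReal.toReal_mono (a := μ s) (b := 1) ENNReal.one_ne_top this
  simpa using h

/-- If `μ ⊗ₘ Kμ` is causal, then for every `Bx` in the past σ-algebra before time `t`,
the map `x ↦ Kμ x Bx` has a version measurable w.r.t. the past before `t`. -/
lemma kernel_version_of_causal {X : Fin N → Type*} [∀ t, MeasurableSpace (X t)]
    (μ : Measure (∀ t, X t)) [IsProbabilityMeasure μ]
    (Kμ : Kernel (∀ t, X t) (∀ t, X t)) [IsMarkovKernel Kμ]
    (hc : IsCausal (μ ⊗ₘ Kμ)) (t : Fin N) {Bx : Set (∀ t, X t)}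
    (hBx : MeasurableSet[pastσ X (t : ℕ)] Bx) :
    ∃ h : (∀ t, X t) → ℝ, Measurable[pastσ X (t : ℕ)] h ∧ (∀ x, |h x| ≤ 1) ∧
      (fun x => (Kμ x Bx).toReal) =ᵐ[μ] h := by
  set ρ := μ ⊗ₘ Kμ with hρ
  set B : Set ((∀ s, X s) × (∀ s, X s)) := Prod.snd ⁻¹' Bx with hBdef
  set f := B.indicator (fun _ => (1 : ℝ)) with hfdef
  have hBx' : MeasurableSet Bx := pastσ_le _ _ hBx
  -- Step 1: the conditional expectation does not change when enlarging the past
  have step : ∀ s : ℕ, (t : ℕ) ≤ s →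
      ρ[f | (pastσ X s).comap Prod.fst] =ᵐ[ρ] ρ[f | (pastσ X (t : ℕ)).comap Prod.fst] := by
    intro s hts
    induction s, hts using Nat.le_induction with
    | base => exact Filter.EventuallyEq.refl _ _
    | succ s hts IH =>
      rcases lt_or_ge s N with hsN | hsN
      · have hcs := hc ⟨s, hsN⟩
        have hred := condexp_sup_of_condIndep (π := ρ)
          (comap_fst_le' (coordσ_le _)) (comap_snd_le' (pastσ_le _))
          (comap_fst_le' (pastσ_le _)) hcs
          (B := B) ⟨Bx, pastσOf_mono hts _ hBx, rfl⟩
        have hsupeq : ((coordσ X ⟨s, hsN⟩).comap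
              (Prod.fst : (∀ u, X u) × (∀ u, X u) → ∀ u, X u) ⊔ (pastσ X s).comap Prod.fst)
            = (pastσ X (s + 1)).comap (Prod.fst : (∀ u, X u) × (∀ u, X u) → ∀ u, X u) := by
          rw [show pastσ X (s + 1) = pastσOf (coordσ X) (s + 1) from rfl, pastσOf_succ hsN,
            MeasurableSpace.comap_sup, sup_comm]
          rfl
        rw [hsupeq] at hred
        exact hred.trans IH
      · rw [show pastσ X (s + 1) = pastσOf (coordσ X) (s + 1) from rfl,
          pastσOf_succ_of_ge hsN]
        exact IH
  have stepN := step N (le_of_lt t.isLt)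
  rw [show pastσ X N = (inferInstance : MeasurableSpace (∀ s, X s)) from pastσ_N X] at stepN
  -- Step 2: identify the condexp given the full first coordinate
  have hfull : ρ[f | MeasurableSpace.comap Prod.fst inferInstance] =ᵐ[ρ]
      fun z => (Kμ z.1 Bx).toReal := by
    refine condexp_snd_preimage_compProd μ Kμ le_rfl hBx'
      ((Kμ.measurable_coe hBx').ennreal_toReal) (fun a => ?_) (Filter.EventuallyEq.refl _ _)
    rw [abs_of_nonneg ENNReal.toReal_nonneg]
    exact toReal_prob_le_one _
  have hkey : (fun z : (∀ s, X s) × (∀ s, X s) => (Kμ z.1 Bx).toReal) =ᵐ[ρ]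
      ρ[f | (pastσ X (t : ℕ)).comap Prod.fst] := hfull.symm.trans stepN
  -- Step 3: factor the condexp through the first coordinate
  set F := ρ[f | (pastσ X (t : ℕ)).comap Prod.fst] with hFdef
  have hFmeas : Measurable[(pastσ X (t : ℕ)).comap Prod.fst] F :=
    stronglyMeasurable_condExp.measurable
  set h₀ : (∀ s, X s) → ℝ := fun x => F (x, x) with hh₀
  have hFfact : ∀ z : (∀ s, X s) × (∀ s, X s), F z = h₀ z.1 := fun z =>
    eq_comp_fst_of_comap_fst_measurable hFmeas z.1 z.2 z.1
  have hh₀meas : Measurable[pastσ X (t : ℕ)] h₀ := by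
    intro s hs
    obtain ⟨s₀, hs₀, heq⟩ := hFmeas hs
    have hpre : h₀ ⁻¹' s = s₀ := by
      ext x
      constructor
      · intro hx
        have hx' : (x, x) ∈ F ⁻¹' s := hx
        rw [← heq] at hx'
        exact hx'
      · intro hx
        have hx' : (x, x) ∈ Prod.fst ⁻¹' s₀ := hx
        rw [heq] at hx'
        exact hx'
    exact hpre ▸ hs₀
  have hae : (fun x => (Kμ x Bx).toReal) =ᵐ[μ] h₀ := by
    have hmapμ : ρ.map Prod.fst = μ := Measure.fst_compProd μ Kμ
    have hρae : ∀ᵐ z ∂ρ, (Kμ z.1 Bx).toReal = h₀ z.1 := by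
      filter_upwards [hkey] with z hz
      rw [hz, hFfact z]
    rw [← hmapμ]
    refine (MeasureTheory.ae_map_iff measurable_fst.aemeasurable ?_).mpr hρae
    exact measurableSet_eq_fun ((Kμ.measurable_coe hBx').ennreal_toReal)
      (hh₀meas.mono (pastσ_le _) le_rfl)
  refine ⟨fun x => max (-1) (min (h₀ x) 1),
    measurable_const.max (hh₀meas.min measurable_const), fun x => ?_, ?_⟩
  · rw [abs_le]
    exact ⟨le_max_left _ _, max_le (by norm_num) (min_le_right _ _)⟩
  · filter_upwards [hae] with x hx
    rw [← hx]
    have h0 : 0 ≤ (Kμ x Bx).toReal := ENNReal.toReal_nonneg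
    have h1 : (Kμ x Bx).toReal ≤ 1 := toReal_prob_le_one _
    rw [min_eq_left h1, max_eq_right (by linarith)]

end KernelVersion

section ShadowVersion

variable {X Y : Fin N → Type*} [∀ t, MeasurableSpace (X t)] [∀ t, MeasurableSpace (Y t)]

lemma pastσOf_coordσ2 (t : ℕ) : pastσOf (coordσ2 X Y) t =
    (pastσ X t).comap Prod.fst ⊔ (pastσ Y t).comap Prod.snd := by
  apply le_antisymm
  · refine iSup_le fun s => iSup_le fun hst => sup_le ?_ ?_
    · exact le_sup_of_le_left (MeasurableSpace.comap_mono (coordσ_le_pastσOf hst))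
    · exact le_sup_of_le_right (MeasurableSpace.comap_mono (coordσ_le_pastσOf hst))
  · refine sup_le ?_ ?_
    · rw [show pastσ X t = pastσOf (coordσ X) t from rfl, pastσOf,
        MeasurableSpace.comap_iSup]
      refine iSup_le fun s => ?_
      rw [MeasurableSpace.comap_iSup]
      exact iSup_le fun hst =>
        le_trans (le_sup_left : _ ≤ coordσ2 X Y s) (coordσ_le_pastσOf (m := coordσ2 X Y) hst)
    · rw [show pastσ Y t = pastσOf (coordσ Y) t from rfl, pastσOf,
        MeasurableSpace.comap_iSup]
      refine iSup_le fun s => ?_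
      rw [MeasurableSpace.comap_iSup]
      exact iSup_le fun hst =>
        le_trans (le_sup_right : _ ≤ coordσ2 X Y s) (coordσ_le_pastσOf (m := coordσ2 X Y) hst)

lemma coordσ2_le (t : Fin N) :
    coordσ2 X Y t ≤ (inferInstance : MeasurableSpace ((∀ s, X s) × (∀ s, Y s))) :=
  sup_le (comap_fst_le' (coordσ_le t)) (comap_snd_le' (coordσ_le t))

lemma pastσOf_coordσ2_le (t : ℕ) :
    pastσOf (coordσ2 X Y) t ≤ (inferInstance : MeasurableSpace ((∀ s, X s) × (∀ s, Y s))) :=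
  pastσOf_le coordσ2_le t

lemma pastσOf_coordσ2_eq_generateFrom (t : ℕ) :
    pastσOf (coordσ2 X Y) t = MeasurableSpace.generateFrom
      (Set.image2 (· ×ˢ ·) {Bx : Set (∀ s, X s) | MeasurableSet[pastσ X t] Bx}
        {By : Set (∀ s, Y s) | MeasurableSet[pastσ Y t] By}) := by
  rw [pastσOf_coordσ2,
    @generateFrom_prod _ _ (pastσ X t) (pastσ Y t)]
  rfl

/-- The shadow kernel of a past-measurable set admits a past-measurable version. -/
lemma shadowKernel_version
    {μ : Measure (∀ t, X t)} [IsProbabilityMeasure μ]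
    {ν : Measure (∀ t, Y t)} [IsProbabilityMeasure ν]
    (Kμ : Kernel (∀ t, X t) (∀ t, X t)) [IsMarkovKernel Kμ]
    (Kν : Kernel (∀ t, Y t) (∀ t, Y t)) [IsMarkovKernel Kν]
    (hKμc : IsCausal (μ ⊗ₘ Kμ)) (hKνc : IsCausal (ν ⊗ₘ Kν))
    {π : Measure ((∀ t, X t) × (∀ t, Y t))} [IsProbabilityMeasure π]
    (hπ1 : π.map Prod.fst = μ) (hπ2 : π.map Prod.snd = ν) (t : Fin N) :
    ∀ ⦃B₀ : Set ((∀ t, X t) × (∀ t, Y t))⦄,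
      MeasurableSet[pastσOf (coordσ2 X Y) (t : ℕ)] B₀ →
      ∃ H : (∀ t, X t) × (∀ t, Y t) → ℝ≥0∞,
        Measurable[pastσOf (coordσ2 X Y) (t : ℕ)] H ∧ (∀ w, H w ≤ 1) ∧
        (fun w => shadowKernel Kμ Kν w B₀) =ᵐ[π] H := by
  haveI : IsMarkovKernel (shadowKernel Kμ Kν) := by unfold shadowKernel; infer_instance
  refine MeasurableSpace.induction_on_inter (m := pastσOf (coordσ2 X Y) (t : ℕ))
    (C := fun B₀ _ => ∃ H : (∀ t, X t) × (∀ t, Y t) → ℝ≥0∞,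
      Measurable[pastσOf (coordσ2 X Y) (t : ℕ)] H ∧ (∀ w, H w ≤ 1) ∧
      (fun w => shadowKernel Kμ Kν w B₀) =ᵐ[π] H)
    (pastσOf_coordσ2_eq_generateFrom (t : ℕ)) ?_ ?_ ?_ ?_ ?_
  · -- π-system
    exact @isPiSystem_prod _ _ (pastσ X (t : ℕ)) (pastσ Y (t : ℕ))
  · -- empty
    exact ⟨0, measurable_const, fun w => by simp, Filter.Eventually.of_forall fun w => by simp⟩
  · -- basic rectangles
    rintro S ⟨Bx, hBx, By, hBy, rfl⟩
    obtain ⟨h, hhm, hh1, hhae⟩ := kernel_version_of_causal μ Kμ hKμc t hBx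
    obtain ⟨k, hkm, hk1, hkae⟩ := kernel_version_of_causal ν Kν hKνc t hBy
    have hBx' : MeasurableSet Bx := pastσ_le _ _ hBx
    have hBy' : MeasurableSet By := pastσ_le _ _ hBy
    have hπae1 : ∀ᵐ w ∂π, (Kμ w.1 Bx).toReal = h w.1 := by
      rw [← hπ1] at hhae
      exact (MeasureTheory.ae_map_iff measurable_fst.aemeasurable
        (measurableSet_eq_fun ((Kμ.measurable_coe hBx').ennreal_toReal)
          (hhm.mono (pastσ_le _) le_rfl))).mp hhae
    have hπae2 : ∀ᵐ w ∂π, (Kν w.2 By).toReal = k w.2 := by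
      rw [← hπ2] at hkae
      exact (MeasureTheory.ae_map_iff measurable_snd.aemeasurable
        (measurableSet_eq_fun ((Kν.measurable_coe hBy').ennreal_toReal)
          (hkm.mono (pastσ_le _) le_rfl))).mp hkae
    refine ⟨fun w => ENNReal.ofReal (h w.1) * ENNReal.ofReal (k w.2), ?_, ?_, ?_⟩
    · exact ((ENNReal.measurable_ofReal.comp
          ((measurable_comp_of_comap hhm).mono
            (le_sup_left.trans_eq (pastσOf_coordσ2 (t : ℕ)).symm) le_rfl))).mul
        (ENNReal.measurable_ofReal.comp
          ((measurable_comp_of_comap hkm).mono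
            (le_sup_right.trans_eq (pastσOf_coordσ2 (t : ℕ)).symm) le_rfl))
    · intro w
      refine mul_le_one' ?_ ?_ <;> rw [ENNReal.ofReal_le_one]
      · exact (abs_le.mp (hh1 w.1)).2
      · exact (abs_le.mp (hk1 w.2)).2
    · filter_upwards [hπae1, hπae2] with w hw1 hw2
      have hker : shadowKernel Kμ Kν w (Bx ×ˢ By) = Kμ w.1 Bx * Kν w.2 By := by
        rw [shadowKernel, Kernel.prod_apply, Kernel.comap_apply, Kernel.comap_apply,
          Measure.prod_prod]
      rw [hker, ← hw1, ← hw2, ENNReal.ofReal_toReal (measure_ne_top _ _),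
        ENNReal.ofReal_toReal (measure_ne_top _ _)]
  · -- compl
    rintro S hS ⟨H, hHm, hH1, hHae⟩
    have hS' : MeasurableSet S := pastσOf_coordσ2_le _ _ hS
    refine ⟨fun w => 1 - H w, measurable_const.sub hHm, fun w => tsub_le_self, ?_⟩
    filter_upwards [hHae] with w hw
    rw [prob_compl_eq_one_sub hS', hw]
  · -- iUnion
    rintro g hdisj hgm hg
    choose H hHm hH1 hHae using hg
    refine ⟨fun w => min 1 (∑' i, H i w), measurable_const.min (Measurable.ennreal_tsum hHm),
      fun w => min_le_left _ _, ?_⟩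
    have hall : ∀ᵐ w ∂π, ∀ i, shadowKernel Kμ Kν w (g i) = H i w :=
      (MeasureTheory.ae_all_iff).mpr hHae
    filter_upwards [hall] with w hw
    have hmeas : shadowKernel Kμ Kν w (⋃ i, g i) = ∑' i, H i w := by
      rw [measure_iUnion hdisj fun i => pastσOf_coordσ2_le _ _ (hgm i)]
      exact tsum_congr hw
    rw [hmeas, eq_comm, min_eq_right]
    rw [← hmeas]
    exact prob_le_one

end ShadowVersion

section ShadowCausal

variable {X Y : Fin N → Type*} [∀ t, MeasurableSpace (X t)] [∀ t, MeasurableSpace (Y t)]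

lemma shadow_isCausalFor
    {μ : Measure (∀ t, X t)} [IsProbabilityMeasure μ]
    {ν : Measure (∀ t, Y t)} [IsProbabilityMeasure ν]
    (Kμ : Kernel (∀ t, X t) (∀ t, X t)) [IsMarkovKernel Kμ]
    (Kν : Kernel (∀ t, Y t) (∀ t, Y t)) [IsMarkovKernel Kν]
    (hKμc : IsCausal (μ ⊗ₘ Kμ)) (hKνc : IsCausal (ν ⊗ₘ Kν))
    {π : Measure ((∀ t, X t) × (∀ t, Y t))} [IsProbabilityMeasure π]
    (hπ1 : π.map Prod.fst = μ) (hπ2 : π.map Prod.snd = ν) :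
    IsCausalFor (coordσ2 X Y) (coordσ2 X Y) (π ⊗ₘ shadowKernel Kμ Kν) := by
  haveI : IsMarkovKernel (shadowKernel Kμ Kν) := by unfold shadowKernel; infer_instance
  intro t
  refine condIndepσ_of_condexp_sup_eq (comap_fst_le' (coordσ2_le t))
    (comap_snd_le' (pastσOf_coordσ2_le _)) (comap_fst_le' (pastσOf_coordσ2_le _)) ?_
  rintro B ⟨B₀, hB₀, rfl⟩
  obtain ⟨H, hHm, hH1, hHae⟩ := shadowKernel_version Kμ Kν hKμc hKνc hπ1 hπ2 t hB₀
  have hB₀' : MeasurableSet B₀ := pastσOf_coordσ2_le _ _ hB₀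
  set g : (∀ t, X t) × (∀ t, Y t) → ℝ := fun w => (H w).toReal with hgdef
  have hgm : Measurable[pastσOf (coordσ2 X Y) (t : ℕ)] g := hHm.ennreal_toReal
  have hg1 : ∀ w, |g w| ≤ 1 := fun w => by
    rw [abs_of_nonneg ENNReal.toReal_nonneg]
    simpa using ENNReal.toReal_mono ENNReal.one_ne_top (hH1 w)
  have hgver : (fun w => (shadowKernel Kμ Kν w B₀).toReal) =ᵐ[π] g := by
    filter_upwards [hHae] with w hw
    rw [hgdef]; simp only [hw]
  have e1 := condexp_snd_preimage_compProd (m := pastσOf (coordσ2 X Y) (t : ℕ))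
    π (shadowKernel Kμ Kν) (pastσOf_coordσ2_le _) hB₀' hgm hg1 hgver
  have e2 := condexp_snd_preimage_compProd
    (m := coordσ2 X Y t ⊔ pastσOf (coordσ2 X Y) (t : ℕ))
    π (shadowKernel Kμ Kν) (sup_le (coordσ2_le t) (pastσOf_coordσ2_le _)) hB₀'
    (hgm.mono le_sup_right le_rfl) hg1 hgver
  have hsup : (coordσ2 X Y t).comap
        (Prod.fst : ((∀ t, X t) × (∀ t, Y t)) × ((∀ t, X t) × (∀ t, Y t)) → _) ⊔
      (pastσOf (coordσ2 X Y) (t : ℕ)).comap Prod.fst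
      = (coordσ2 X Y t ⊔ pastσOf (coordσ2 X Y) (t : ℕ)).comap Prod.fst :=
    (MeasurableSpace.comap_sup).symm
  rw [hsup]
  exact e2.trans e1.symm

end ShadowCausal

section Cost

variable {X Y : Fin N → Type*}
    [∀ t, MeasurableSpace (X t)] [∀ t, MetricSpace (X t)]
    [∀ t, PolishSpace (X t)] [∀ t, BorelSpace (X t)]
    [∀ t, MeasurableSpace (Y t)] [∀ t, MetricSpace (Y t)]
    [∀ t, PolishSpace (Y t)] [∀ t, BorelSpace (Y t)]

set_option synthInstance.maxHeartbeats 1000000 in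
set_option maxHeartbeats 1000000 in
lemma lcost2_shadow (p : ℝ)
    {μ : Measure (∀ t, X t)} [IsProbabilityMeasure μ]
    {ν : Measure (∀ t, Y t)} [IsProbabilityMeasure ν]
    (Kμ : Kernel (∀ t, X t) (∀ t, X t)) [IsMarkovKernel Kμ]
    (Kν : Kernel (∀ t, Y t) (∀ t, Y t)) [IsMarkovKernel Kν]
    {π : Measure ((∀ t, X t) × (∀ t, Y t))} [IsProbabilityMeasure π]
    (hπ1 : π.map Prod.fst = μ) (hπ2 : π.map Prod.snd = ν) :
    lcost2 p (π ⊗ₘ shadowKernel Kμ Kν) = lcost p (μ ⊗ₘ Kμ) + lcost p (ν ⊗ₘ Kν) := by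
  haveI : IsMarkovKernel (shadowKernel Kμ Kν) := by unfold shadowKernel; infer_instance
  have hrpow : Measurable fun x : ℝ≥0∞ => x ^ p := ENNReal.continuous_rpow_const.measurable
  have hexX : Measurable fun z : (∀ t, X t) × (∀ t, X t) => edist z.1 z.2 ^ p :=
    hrpow.comp measurable_edist
  have hexY : Measurable fun z : (∀ t, Y t) × (∀ t, Y t) => edist z.1 z.2 ^ p :=
    hrpow.comp measurable_edist
  have hex1 : Measurable fun z : ((∀ t, X t) × (∀ t, Y t)) × ((∀ t, X t) × (∀ t, Y t)) =>
      edist z.1.1 z.2.1 ^ p :=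
    hexX.comp ((measurable_fst.fst).prodMk (measurable_snd.fst))
  have hex2 : Measurable fun z : ((∀ t, X t) × (∀ t, Y t)) × ((∀ t, X t) × (∀ t, Y t)) =>
      edist z.1.2 z.2.2 ^ p :=
    hexY.comp ((measurable_fst.snd).prodMk (measurable_snd.snd))
  have hkerapp : ∀ w : (∀ t, X t) × (∀ t, Y t),
      shadowKernel Kμ Kν w = (Kμ w.1).prod (Kν w.2) := fun w => by
    rw [shadowKernel, Kernel.prod_apply, Kernel.comap_apply, Kernel.comap_apply]
  have hA : ∫⁻ z, edist z.1.1 z.2.1 ^ p ∂(π ⊗ₘ shadowKernel Kμ Kν)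
      = lcost p (μ ⊗ₘ Kμ) := by
    rw [Measure.lintegral_compProd hex1]
    have hinner : ∀ w : (∀ t, X t) × (∀ t, Y t),
        ∫⁻ w', edist w.1 w'.1 ^ p ∂(shadowKernel Kμ Kν w)
          = ∫⁻ x', edist w.1 x' ^ p ∂(Kμ w.1) := by
      intro w
      rw [hkerapp w, MeasureTheory.lintegral_prod (fun w' => edist w.1 w'.1 ^ p)
        ((hrpow.comp (measurable_edist.comp
          (measurable_const.prodMk measurable_fst))).aemeasurable)]
      simp_rw [lintegral_const, measure_univ, mul_one]
    simp_rw [hinner]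
    have hG : Measurable fun x : ∀ t, X t => ∫⁻ x', edist x x' ^ p ∂(Kμ x) :=
      Measurable.lintegral_kernel_prod_right hexX
    rw [lcost, Measure.lintegral_compProd hexX, ← hπ1, lintegral_map hG measurable_fst]
  have hB : ∫⁻ z, edist z.1.2 z.2.2 ^ p ∂(π ⊗ₘ shadowKernel Kμ Kν)
      = lcost p (ν ⊗ₘ Kν) := by
    rw [Measure.lintegral_compProd hex2]
    have hinner : ∀ w : (∀ t, X t) × (∀ t, Y t),
        ∫⁻ w', edist w.2 w'.2 ^ p ∂(shadowKernel Kμ Kν w)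
          = ∫⁻ y', edist w.2 y' ^ p ∂(Kν w.2) := by
      intro w
      rw [hkerapp w, MeasureTheory.lintegral_prod (fun w' => edist w.2 w'.2 ^ p)
        ((hrpow.comp (measurable_edist.comp
          (measurable_const.prodMk measurable_snd))).aemeasurable)]
      simp_rw [lintegral_const, measure_univ, mul_one]
    simp_rw [hinner]
    have hG : Measurable fun y : ∀ t, Y t => ∫⁻ y', edist y y' ^ p ∂(Kν y) :=
      Measurable.lintegral_kernel_prod_right hexY
    rw [lcost, Measure.lintegral_compProd hexY, ← hπ2, lintegral_map hG measurable_snd]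
  rw [lcost2, lintegral_add_left hex1, hA, hB]

end Cost
/-- With `θ := π ⊗ (K^μ ⊗ K^ν) ∈ Π(π, π̃)`: if `μ ⊗ K^μ` and `ν ⊗ K^ν` are
causal, then `θ ∈ Π_c(π, π̃)`; if moreover they are `W_{p,c}`-optimal, then
`W_{p,c}(π, π̃)^p ≤ W_{p,c}(μ, μ̃)^p + W_{p,c}(ν, ν̃)^p`. -/
theorem stmt_4 {N : ℕ} (X Y : Fin N → Type*)
    [∀ t, MeasurableSpace (X t)] [∀ t, MetricSpace (X t)]
    [∀ t, PolishSpace (X t)] [∀ t, BorelSpace (X t)]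
    [∀ t, MeasurableSpace (Y t)] [∀ t, MetricSpace (Y t)]
    [∀ t, PolishSpace (Y t)] [∀ t, BorelSpace (Y t)]
    (p : ℝ) (hp : 1 ≤ p)
    (μ μ' : Measure (∀ t, X t)) (ν ν' : Measure (∀ t, Y t))
    [IsProbabilityMeasure μ] [IsProbabilityMeasure μ']
    [IsProbabilityMeasure ν] [IsProbabilityMeasure ν']
    (hμp : MemPp p μ) (hμ'p : MemPp p μ') (hνp : MemPp p ν) (hν'p : MemPp p ν')
    (Kμ : Kernel (∀ t, X t) (∀ t, X t)) [IsMarkovKernel Kμ]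
    (Kν : Kernel (∀ t, Y t) (∀ t, Y t)) [IsMarkovKernel Kν]
    (hγ : IsCoupling μ μ' (μ ⊗ₘ Kμ)) (hγ' : IsCoupling ν ν' (ν ⊗ₘ Kν))
    (π : Measure ((∀ t, X t) × (∀ t, Y t)))
    (hπ : π ∈ aCouplings .plain μ ν)
    (hKμc : IsCausal (μ ⊗ₘ Kμ)) (hKνc : IsCausal (ν ⊗ₘ Kν)) :
    π ⊗ₘ shadowKernel Kμ Kν ∈ aCouplings2 .causal π (shadow π Kμ Kν) ∧
      (lcost p (μ ⊗ₘ Kμ) = W p .causal μ μ' ^ p →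
       lcost p (ν ⊗ₘ Kν) = W p .causal ν ν' ^ p →
       W2 p .causal π (shadow π Kμ Kν) ^ p ≤
         W p .causal μ μ' ^ p + W p .causal ν ν' ^ p) := by
  haveI : IsMarkovKernel (shadowKernel Kμ Kν) := by unfold shadowKernel; infer_instance
  obtain ⟨⟨hπ1, hπ2⟩, -⟩ := hπ
  haveI : IsProbabilityMeasure π := by
    constructor
    have h := measure_univ (μ := μ)
    rw [← hπ1, Measure.map_apply measurable_fst MeasurableSet.univ, Set.preimage_univ] at h
    exact h
  have hθmem : π ⊗ₘ shadowKernel Kμ Kν ∈ aCouplings2 .causal π (shadow π Kμ Kν) := by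
    refine ⟨⟨?_, rfl⟩, ?_⟩
    · exact Measure.fst_compProd π _
    · exact shadow_isCausalFor Kμ Kν hKμc hKνc hπ1 hπ2
  refine ⟨hθmem, fun hμopt hνopt => ?_⟩
  have hp0 : p ≠ 0 := ne_of_gt (lt_of_lt_of_le one_pos hp)
  have hW2 : W2 p .causal π (shadow π Kμ Kν) ^ p
      = ⨅ θ : aCouplings2 .causal π (shadow π Kμ Kν), lcost2 p θ.1 := by
    rw [W2, ← ENNReal.rpow_mul, one_div, inv_mul_cancel₀ hp0, ENNReal.rpow_one]
  rw [hW2, ← hμopt, ← hνopt, ← lcost2_shadow p Kμ Kν hπ1 hπ2]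
  exact iInf_le (fun θ : aCouplings2 .causal π (shadow π Kμ Kν) => lcost2 p θ.1) ⟨_, hθmem⟩

end AOT
end
end
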